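/- Over any field k, the Chevalley generators x_i(z) and y_i(z) are invertible: for every i ∈ I and z ∈ k, x_i(z) ∘ x_i(−z) = id_{V_k} and y_i(z) ∘ y_i(−z) = id_{V_k}; in particular x_i(z), y_i(z) ∈ GL(V_k). -/

import Mathlib

open scoped RealInnerProductSpace

/-- A finite, reduced, irreducible, crystallographic root system `R` spanning a
finite-dimensional real inner product space `E`, together with a base of simple
roots indexed by `I`, the integral Cartan pairing `pair`, and for each simple
root `αᵢ` and each root `α` not proportional to `αᵢ` the chain lengths
`p i α`, `q i α` (largest `n ≥ 0` with `α + n αᵢ`, resp. `α - n αᵢ`, a root). -/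
structure RootSystemData (E : Type) [NormedAddCommGroup E] [InnerProductSpace ℝ E]
    [FiniteDimensional ℝ E] (I : Type) [Fintype I] : Type where
  R : Set E
  finite : R.Finite
  zero_not_mem : (0 : E) ∉ R
  spans : Submodule.span ℝ R = ⊤
  neg_mem : ∀ α ∈ R, -α ∈ R
  reduced : ∀ α ∈ R, ∀ r : ℝ, r • α ∈ R → r = 1 ∨ r = -1
  pair : E → E → ℤ
  pair_def : ∀ α ∈ R, ∀ β ∈ R, (pair α β : ℝ) * ⟪α, α⟫ = 2 * ⟪α, β⟫
  reflect_mem : ∀ α ∈ R, ∀ β ∈ R, β - (pair α β : ℝ) • α ∈ R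
  irreducible : ∀ R₁ R₂ : Set E, R = R₁ ∪ R₂ →
    (∀ α ∈ R₁, ∀ β ∈ R₂, ⟪α, β⟫ = 0) → R₁ = ∅ ∨ R₂ = ∅
  simple : I → E
  simple_mem : ∀ i, simple i ∈ R
  simple_indep : LinearIndependent ℝ simple
  simple_gen : ∀ α ∈ R,
    (∃ c : I → ℕ, α = ∑ i, (c i : ℝ) • simple i) ∨
    (∃ c : I → ℕ, α = -(∑ i, (c i : ℝ) • simple i))
  p : I → E → ℕ
  q : I → E → ℕ
  p_mem : ∀ i, ∀ α ∈ R, (∀ r : ℝ, α ≠ r • simple i) →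
    ∀ k : ℕ, k ≤ p i α → α + (k : ℝ) • simple i ∈ R
  p_max : ∀ i, ∀ α ∈ R, (∀ r : ℝ, α ≠ r • simple i) →
    α + ((p i α : ℝ) + 1) • simple i ∉ R
  q_mem : ∀ i, ∀ α ∈ R, (∀ r : ℝ, α ≠ r • simple i) →
    ∀ k : ℕ, k ≤ q i α → α - (k : ℝ) • simple i ∈ R
  q_max : ∀ i, ∀ α ∈ R, (∀ r : ℝ, α ≠ r • simple i) →
    α - ((q i α : ℝ) + 1) • simple i ∉ R

noncomputable section

variable {E : Type} [NormedAddCommGroup E] [InnerProductSpace ℝ E]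
  [FiniteDimensional ℝ E] {I : Type} [Fintype I]
  {k : Type} [Field k]

/-- The `k`-vector space `V_k` with basis `{X_α : α ∈ R} ∪ {t_i : i ∈ I}`. -/
abbrev Vk (D : RootSystemData E I) (k : Type) [Field k] : Type :=
  ({x : E // x ∈ D.R} ⊕ I) →₀ k

/-- The basis vector `X_α` of `V_k`, for a root `α`. -/
def Xk (D : RootSystemData E I) (k : Type) [Field k]
    (a : {x : E // x ∈ D.R}) : Vk D k :=
  Finsupp.single (Sum.inl a) 1

/-- The basis vector `t_j` of `V_k`, for `j ∈ I`. -/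
def tk (D : RootSystemData E I) (k : Type) [Field k] (j : I) : Vk D k :=
  Finsupp.single (Sum.inr j) 1

open Classical in
/-- The Chevalley generator `x_i(z)` on `V_k`, defined on basis vectors by the
integral exponential formulas (with the convention `p_{i,±αᵢ} = q_{i,±αᵢ} = 0`). -/
def xop (D : RootSystemData E I) (k : Type) [Field k] (i : I) (z : k) :
    Vk D k →ₗ[k] Vk D k :=
  Finsupp.lift (Vk D k) k _ fun b =>
    match b with
    | Sum.inl a =>
        if (a : E) = -(D.simple i) then
          Xk D k a + z • tk D k i + z ^ 2 • Xk D k ⟨D.simple i, D.simple_mem i⟩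
        else if (a : E) = D.simple i then Xk D k a
        else
          ∑ m ∈ Finset.range (D.p i (a : E) + 1),
            ((((D.q i (a : E) + m).factorial /
                ((D.q i (a : E)).factorial * m.factorial) : ℕ) : k) * z ^ m) •
              (if h : (a : E) + (m : ℝ) • D.simple i ∈ D.R then
                Xk D k ⟨(a : E) + (m : ℝ) • D.simple i, h⟩ else 0)
    | Sum.inr j =>
        tk D k j + (((|D.pair (D.simple j) (D.simple i)| : ℤ) : k) * z) •
          Xk D k ⟨D.simple i, D.simple_mem i⟩

open Classical in
/-- The Chevalley generator `y_i(z)` on `V_k`, defined on basis vectors by the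
integral exponential formulas (with the convention `p_{i,±αᵢ} = q_{i,±αᵢ} = 0`). -/
def yop (D : RootSystemData E I) (k : Type) [Field k] (i : I) (z : k) :
    Vk D k →ₗ[k] Vk D k :=
  Finsupp.lift (Vk D k) k _ fun b =>
    match b with
    | Sum.inl a =>
        if (a : E) = D.simple i then
          Xk D k a + z • tk D k i +
            z ^ 2 • Xk D k ⟨-(D.simple i), D.neg_mem (D.simple i) (D.simple_mem i)⟩
        else if (a : E) = -(D.simple i) then Xk D k a
        else
          ∑ m ∈ Finset.range (D.q i (a : E) + 1),
            ((((D.p i (a : E) + m).factorial /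
                ((D.p i (a : E)).factorial * m.factorial) : ℕ) : k) * z ^ m) •
              (if h : (a : E) - (m : ℝ) • D.simple i ∈ D.R then
                Xk D k ⟨(a : E) - (m : ℝ) • D.simple i, h⟩ else 0)
    | Sum.inr j =>
        tk D k j + (((|D.pair (D.simple j) (D.simple i)| : ℤ) : k) * z) •
          Xk D k ⟨-(D.simple i), D.neg_mem (D.simple i) (D.simple_mem i)⟩


section Comb
open Finset

lemma tri_sum {M : Type*} [AddCommMonoid M] (p : ℕ) (f : ℕ → ℕ → M) :
    ∑ m ∈ range (p+1), ∑ m' ∈ range (p - m + 1), f m (m + m') =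
    ∑ n ∈ range (p+1), ∑ m ∈ range (n+1), f m n := by
  rw [Finset.sum_sigma', Finset.sum_sigma']
  apply Finset.sum_nbij' (fun x => (⟨x.1 + x.2, x.1⟩ : Σ _ : ℕ, ℕ))
    (fun y => (⟨y.2, y.1 - y.2⟩ : Σ _ : ℕ, ℕ))
  · rintro ⟨m, m'⟩ h
    simp only [mem_sigma, mem_range] at h ⊢; omega
  · rintro ⟨n, m⟩ h
    simp only [mem_sigma, mem_range] at h ⊢; omega
  · rintro ⟨m, m'⟩ h
    dsimp only
    simp only [Sigma.mk.inj_iff]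
    exact ⟨trivial, heq_of_eq (by omega)⟩
  · rintro ⟨n, m⟩ h
    simp only [mem_sigma, mem_range] at h
    dsimp only
    simp only [Sigma.mk.inj_iff]
    exact ⟨by omega, HEq.rfl⟩
  · rintro ⟨m, m'⟩ h; rfl

lemma alt_sum (q n : ℕ) (hn : n ≠ 0) :
    ∑ m ∈ range (n+1), ((-1:ℤ)^m * ((q+m).choose m * (q+n).choose (n-m))) = 0 := by
  have step : ∀ m ∈ range (n+1),
      ((-1:ℤ)^m * ((q+m).choose m * (q+n).choose (n-m)))
      = ((q+n).choose q : ℤ) * ((-1)^m * n.choose m) := by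
    intro m hm
    rw [mem_range] at hm
    have h1 : (q+m).choose m = (q+m).choose q := by
      rw [← Nat.choose_symm (Nat.le_add_right q m)]
      congr 1; omega
    have h2 : (q+n).choose (n-m) = (q+n).choose (q+m) := by
      rw [← Nat.choose_symm (by omega : q + m ≤ q + n)]
      congr 1; omega
    have h3 := Nat.choose_mul (n := q+n) (show q ≤ q+m by omega)
    have h4 : (q+m).choose q * (q+n).choose (q+m) = (q+n).choose q * n.choose m := by
      rw [mul_comm, h3]; congr 2 <;> omega
    rw [h1, h2, ← Nat.cast_mul, h4]
    push_cast; ring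
  rw [Finset.sum_congr rfl step, ← Finset.mul_sum,
    Int.alternating_sum_range_choose_of_ne hn, mul_zero]

lemma key_sum {k : Type*} [Field k] {M : Type*} [AddCommMonoid M] [Module k M]
    (p q : ℕ) (z : k) (X : ℕ → M) :
    ∑ m ∈ range (p+1), (((q+m).choose m : k) * (-z)^m) •
      ∑ m' ∈ range (p - m + 1), (((q+(m+m')).choose m' : k) * z^m') • X (m+m') = X 0 := by
  have e1 : ∀ m ∈ range (p+1),
      (((q+m).choose m : k) * (-z)^m) •
        ∑ m' ∈ range (p - m + 1), (((q+(m+m')).choose m' : k) * z^m') • X (m+m')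
      = ∑ m' ∈ range (p - m + 1),
          ((((q+m).choose m : k) * (-z)^m * (((q+(m+m')).choose ((m+m')-m) : k) * z^((m+m')-m))) • X (m+m')) := by
    intro m _
    rw [Finset.smul_sum]
    refine Finset.sum_congr rfl fun m' _ => ?_
    rw [smul_smul, Nat.add_sub_cancel_left]
  rw [Finset.sum_congr rfl e1,
    tri_sum p (fun m n => ((((q+m).choose m : k) * (-z)^m * (((q+n).choose (n-m) : k) * z^(n-m))) • X n))]
  have hz : ∀ n ∈ range (p+1), n ≠ 0 →
      (∑ m ∈ range (n+1),
        ((((q+m).choose m : k) * (-z)^m * (((q+n).choose (n-m) : k) * z^(n-m))) • X n)) = 0 := by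
    intro n _ hn
    rw [← Finset.sum_smul]
    have e2 : ∀ m ∈ range (n+1),
        ((q+m).choose m : k) * (-z)^m * (((q+n).choose (n-m) : k) * z^(n-m))
        = (((-1:ℤ)^m * ((q+m).choose m * (q+n).choose (n-m)) : ℤ) : k) * z^n := by
      intro m hm
      rw [mem_range] at hm
      have hzp : z^m * z^(n-m) = z^n := by rw [← pow_add]; congr 1; omega
      rw [neg_pow]
      push_cast
      calc ((q+m).choose m : k) * ((-1)^m * z^m) * (((q+n).choose (n-m) : k) * z^(n-m))
          = (-1)^m * (((q+m).choose m : k) * ((q+n).choose (n-m) : k)) * (z^m * z^(n-m)) := by ring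
        _ = (-1)^m * (((q+m).choose m : k) * ((q+n).choose (n-m) : k)) * z^n := by rw [hzp]
        _ = _ := by ring
    rw [Finset.sum_congr rfl e2, ← Finset.sum_mul, ← Int.cast_sum, alt_sum q n hn]
    simp
  rw [Finset.sum_eq_single_of_mem 0 (Finset.mem_range.mpr (by omega))
    (fun n hn hne => hz n hn hne)]
  simp

end Comb

section Aux
variable (D : RootSystemData E I)

open Classical in
lemma xop_X (i : I) (z : k) (a : {x : E // x ∈ D.R}) :
    xop D k i z (Xk D k a) =
      (if (a : E) = -(D.simple i) then
          Xk D k a + z • tk D k i + z ^ 2 • Xk D k ⟨D.simple i, D.simple_mem i⟩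
        else if (a : E) = D.simple i then Xk D k a
        else
          ∑ m ∈ Finset.range (D.p i (a : E) + 1),
            ((((D.q i (a : E) + m).factorial /
                ((D.q i (a : E)).factorial * m.factorial) : ℕ) : k) * z ^ m) •
              (if h : (a : E) + (m : ℝ) • D.simple i ∈ D.R then
                Xk D k ⟨(a : E) + (m : ℝ) • D.simple i, h⟩ else 0)) := by
  rw [xop, Finsupp.lift_apply, Xk, Finsupp.sum_single_index (by simp), one_smul]
  rfl

open Classical in
lemma xop_t (i : I) (z : k) (j : I) :
    xop D k i z (tk D k j) =
      tk D k j + (((|D.pair (D.simple j) (D.simple i)| : ℤ) : k) * z) •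
          Xk D k ⟨D.simple i, D.simple_mem i⟩ := by
  rw [xop, Finsupp.lift_apply, tk, Finsupp.sum_single_index (by simp), one_smul]
  rfl

end Aux

section Aux2
variable (D : RootSystemData E I)

lemma s_ne (i : I) : D.simple i ≠ 0 := by
  intro h
  exact D.zero_not_mem (h ▸ D.simple_mem i)

lemma nonprop {i : I} {α : E} (hα : α ∈ D.R) (h1 : α ≠ D.simple i)
    (h2 : α ≠ -D.simple i) : ∀ r : ℝ, α ≠ r • D.simple i := by
  intro r h
  rcases D.reduced (D.simple i) (D.simple_mem i) r (h ▸ hα) with h' | h'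
  · subst h'; rw [one_smul] at h; exact h1 h
  · subst h'; rw [neg_one_smul] at h; exact h2 h

lemma nonprop_shift {i : I} {α : E} (hnp : ∀ r : ℝ, α ≠ r • D.simple i) (t : ℝ) :
    ∀ r : ℝ, α + t • D.simple i ≠ r • D.simple i := by
  intro r h
  exact hnp (r - t) (by rw [sub_smul, ← h]; abel)

lemma string_vals {i : I} {α : E} (hα : α ∈ D.R) (hnp : ∀ r : ℝ, α ≠ r • D.simple i)
    {m : ℕ} (hm : m ≤ D.p i α) :
    D.q i (α + (m : ℝ) • D.simple i) = D.q i α + m ∧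
    D.p i (α + (m : ℝ) • D.simple i) = D.p i α - m := by
  set s := D.simple i with hs
  set β := α + (m : ℝ) • s with hβdef
  have hβ : β ∈ D.R := D.p_mem i α hα hnp m hm
  have hβnp : ∀ r : ℝ, β ≠ r • s := nonprop_shift D hnp (m : ℝ)
  have mem_sub : ∀ j : ℕ, j ≤ D.q i α + m → β - (j : ℝ) • s ∈ D.R := by
    intro j hj
    by_cases hjm : j ≤ m
    · have e : β - (j : ℝ) • s = α + ((m - j : ℕ) : ℝ) • s := by
        push_cast [Nat.cast_sub hjm]; module
      rw [e]; exact D.p_mem i α hα hnp (m - j) (by omega)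
    · have e : β - (j : ℝ) • s = α - ((j - m : ℕ) : ℝ) • s := by
        push_cast [Nat.cast_sub (by omega : m ≤ j)]; module
      rw [e]; exact D.q_mem i α hα hnp (j - m) (by omega)
  have mem_add : ∀ j : ℕ, j ≤ D.p i α - m → β + (j : ℝ) • s ∈ D.R := by
    intro j hj
    have e : β + (j : ℝ) • s = α + ((m + j : ℕ) : ℝ) • s := by push_cast; module
    rw [e]; exact D.p_mem i α hα hnp (m + j) (by omega)
  constructor
  · have le1 : D.q i β ≤ D.q i α + m := by
      by_contra h
      push_neg at h
      have h2 := D.q_mem i β hβ hβnp (D.q i α + m + 1) (by omega)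
      apply D.q_max i α hα hnp
      have e : α - ((D.q i α : ℝ) + 1) • s = β - ((D.q i α + m + 1 : ℕ) : ℝ) • s := by
        push_cast; module
      rw [e]; exact h2
    have le2 : D.q i α + m ≤ D.q i β := by
      by_contra h
      push_neg at h
      have h2 := mem_sub (D.q i β + 1) (by omega)
      apply D.q_max i β hβ hβnp
      have e : β - ((D.q i β : ℝ) + 1) • s = β - ((D.q i β + 1 : ℕ) : ℝ) • s := by
        push_cast; ring_nf
      rw [e]; exact h2
    omega
  · have le1 : D.p i β ≤ D.p i α - m := by
      by_contra h
      push_neg at h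
      have h2 := D.p_mem i β hβ hβnp (D.p i α - m + 1) (by omega)
      apply D.p_max i α hα hnp
      have e : α + ((D.p i α : ℝ) + 1) • s = β + ((D.p i α - m + 1 : ℕ) : ℝ) • s := by
        push_cast [Nat.cast_sub hm]; module
      rw [e]; exact h2
    have le2 : D.p i α - m ≤ D.p i β := by
      by_contra h
      push_neg at h
      have h2 := mem_add (D.p i β + 1) (by omega)
      apply D.p_max i β hβ hβnp
      have e : β + ((D.p i β : ℝ) + 1) • s = β + ((D.p i β + 1 : ℕ) : ℝ) • s := by
        push_cast; ring_nf
      rw [e]; exact h2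
    omega

end Aux2

lemma factdiv (q m : ℕ) :
    ((q + m).factorial / (q.factorial * m.factorial)) = (q + m).choose m := by
  rw [Nat.choose_eq_factorial_div_factorial (Nat.le_add_left m q), Nat.add_sub_cancel,
    Nat.mul_comm]

open Classical Finset in
lemma xop_comp (D : RootSystemData E I) (i : I) (z : k) :
    xop D k i z ∘ₗ xop D k i (-z) = LinearMap.id := by
  have hss : D.simple i ≠ -(D.simple i) := by
    intro h
    apply s_ne D i
    have h2 : (2:ℝ) • D.simple i = 0 := by
      rw [two_smul]; nth_rewrite 2 [h]; simp
    simpa using (smul_eq_zero.mp h2).resolve_left (by norm_num)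
  apply Finsupp.lhom_ext
  intro b c
  have hsingle : Finsupp.single b c = c • Finsupp.single b (1:k) := by
    rw [Finsupp.smul_single, smul_eq_mul, mul_one]
  rw [hsingle, map_smul, map_smul]
  congr 1
  rw [LinearMap.comp_apply, LinearMap.id_apply]
  match b with
  | Sum.inr j =>
    rw [show (Finsupp.single (Sum.inr j) (1:k) : Vk D k) = tk D k j from rfl]
    rw [xop_t, map_add, map_smul, xop_t, xop_X, if_neg hss, if_pos rfl]
    module
  | Sum.inl a =>
    rw [show (Finsupp.single (Sum.inl a) (1:k) : Vk D k) = Xk D k a from rfl]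
    by_cases ha1 : (a : E) = -(D.simple i)
    · have hpair : ((|D.pair (D.simple i) (D.simple i)| : ℤ) : k) = 2 := by
        have h0 : ⟪D.simple i, D.simple i⟫ ≠ 0 := by
          intro h; exact s_ne D i (inner_self_eq_zero.mp h)
        have := D.pair_def (D.simple i) (D.simple_mem i) (D.simple i) (D.simple_mem i)
        have h2 : (D.pair (D.simple i) (D.simple i) : ℝ) = 2 :=
          mul_right_cancel₀ h0 this
        have h3 : D.pair (D.simple i) (D.simple i) = 2 := by exact_mod_cast h2
        rw [h3]; norm_num
      rw [xop_X, if_pos ha1, map_add, map_add, map_smul, map_smul,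
        xop_X, if_pos ha1, xop_t, hpair, xop_X, if_neg hss, if_pos rfl]
      module
    · by_cases ha2 : (a : E) = D.simple i
      · rw [xop_X, if_neg ha1, if_pos ha2, xop_X, if_neg ha1, if_pos ha2]
      · -- generic case
        have hα : (a : E) ∈ D.R := a.2
        have hnp : ∀ r : ℝ, (a : E) ≠ r • D.simple i := nonprop D hα ha2 ha1
        set p := D.p i (a : E) with hp
        set q := D.q i (a : E) with hq
        set Xn : ℕ → Vk D k := fun n =>
          if h : (a : E) + (n : ℝ) • D.simple i ∈ D.R then
            Xk D k ⟨(a : E) + (n : ℝ) • D.simple i, h⟩ else 0 with hXn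
        have step1 : xop D k i (-z) (Xk D k a)
            = ∑ m ∈ range (p+1), (((q+m).choose m : k) * (-z)^m) • Xn m := by
          rw [xop_X, if_neg ha1, if_neg ha2]
          simp only [factdiv, hXn]
          rfl
        have step2 : ∀ m ∈ range (p+1), xop D k i z (Xn m)
            = ∑ m' ∈ range (p - m + 1), (((q+(m+m')).choose m' : k) * z^m') • Xn (m+m') := by
          intro m hm
          rw [mem_range] at hm
          have hm' : m ≤ p := by omega
          have hmem : (a : E) + (m : ℝ) • D.simple i ∈ D.R := D.p_mem i _ hα hnp m hm'
          have hvals := string_vals D hα hnp hm'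
          have hsnp := nonprop_shift D hnp (m : ℝ)
          have hne1 : (a : E) + (m : ℝ) • D.simple i ≠ -(D.simple i) := by
            intro h; exact hsnp (-1) (by rw [h, neg_one_smul])
          have hne2 : (a : E) + (m : ℝ) • D.simple i ≠ D.simple i := by
            intro h; exact hsnp 1 (by rw [h, one_smul])
          rw [show Xn m = Xk D k ⟨(a : E) + (m : ℝ) • D.simple i, hmem⟩ from dif_pos hmem]
          rw [xop_X, if_neg hne1, if_neg hne2]
          rw [hvals.1, hvals.2]
          simp only [factdiv]
          refine Finset.sum_congr rfl fun m' _ => ?_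
          have e : ((a : E) + (m : ℝ) • D.simple i) + (m' : ℝ) • D.simple i
              = (a : E) + ((m + m' : ℕ) : ℝ) • D.simple i := by push_cast; module
          congr 1
          · congr 3
            omega
          · simp only [e, hXn]
        rw [step1, map_sum]
        simp only [map_smul]
        rw [Finset.sum_congr rfl fun m hm => by rw [step2 m hm]]
        rw [key_sum p q z Xn]
        have e0 : (a : E) + ((0 : ℕ) : ℝ) • D.simple i = (a : E) := by push_cast; module
        show (if h : (a : E) + ((0:ℕ) : ℝ) • D.simple i ∈ D.R then
            Xk D k ⟨(a : E) + ((0:ℕ) : ℝ) • D.simple i, h⟩ else 0) = Xk D k a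
        simp only [e0]
        rw [dif_pos hα]

section YAux
variable (D : RootSystemData E I)

open Classical in
lemma yop_X (i : I) (z : k) (a : {x : E // x ∈ D.R}) :
    yop D k i z (Xk D k a) =
      (if (a : E) = D.simple i then
          Xk D k a + z • tk D k i +
            z ^ 2 • Xk D k ⟨-(D.simple i), D.neg_mem (D.simple i) (D.simple_mem i)⟩
        else if (a : E) = -(D.simple i) then Xk D k a
        else
          ∑ m ∈ Finset.range (D.q i (a : E) + 1),
            ((((D.p i (a : E) + m).factorial /
                ((D.p i (a : E)).factorial * m.factorial) : ℕ) : k) * z ^ m) •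
              (if h : (a : E) - (m : ℝ) • D.simple i ∈ D.R then
                Xk D k ⟨(a : E) - (m : ℝ) • D.simple i, h⟩ else 0)) := by
  rw [yop, Finsupp.lift_apply, Xk, Finsupp.sum_single_index (by simp), one_smul]
  rfl

open Classical in
lemma yop_t (i : I) (z : k) (j : I) :
    yop D k i z (tk D k j) =
      tk D k j + (((|D.pair (D.simple j) (D.simple i)| : ℤ) : k) * z) •
          Xk D k ⟨-(D.simple i), D.neg_mem (D.simple i) (D.simple_mem i)⟩ := by
  rw [yop, Finsupp.lift_apply, tk, Finsupp.sum_single_index (by simp), one_smul]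
  rfl

lemma nonprop_shift' {i : I} {α : E} (hnp : ∀ r : ℝ, α ≠ r • D.simple i) (t : ℝ) :
    ∀ r : ℝ, α - t • D.simple i ≠ r • D.simple i := by
  intro r h
  exact hnp (r + t) (by rw [add_smul, ← h]; abel)

lemma string_vals' {i : I} {α : E} (hα : α ∈ D.R) (hnp : ∀ r : ℝ, α ≠ r • D.simple i)
    {m : ℕ} (hm : m ≤ D.q i α) :
    D.p i (α - (m : ℝ) • D.simple i) = D.p i α + m ∧
    D.q i (α - (m : ℝ) • D.simple i) = D.q i α - m := by
  set s := D.simple i with hs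
  set β := α - (m : ℝ) • s with hβdef
  have hβ : β ∈ D.R := D.q_mem i α hα hnp m hm
  have hβnp : ∀ r : ℝ, β ≠ r • s := nonprop_shift' D hnp (m : ℝ)
  have mem_add : ∀ j : ℕ, j ≤ D.p i α + m → β + (j : ℝ) • s ∈ D.R := by
    intro j hj
    by_cases hjm : j ≤ m
    · have e : β + (j : ℝ) • s = α - ((m - j : ℕ) : ℝ) • s := by
        push_cast [Nat.cast_sub hjm]; module
      rw [e]; exact D.q_mem i α hα hnp (m - j) (by omega)
    · have e : β + (j : ℝ) • s = α + ((j - m : ℕ) : ℝ) • s := by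
        push_cast [Nat.cast_sub (by omega : m ≤ j)]; module
      rw [e]; exact D.p_mem i α hα hnp (j - m) (by omega)
  have mem_sub : ∀ j : ℕ, j ≤ D.q i α - m → β - (j : ℝ) • s ∈ D.R := by
    intro j hj
    have e : β - (j : ℝ) • s = α - ((m + j : ℕ) : ℝ) • s := by push_cast; module
    rw [e]; exact D.q_mem i α hα hnp (m + j) (by omega)
  constructor
  · have le1 : D.p i β ≤ D.p i α + m := by
      by_contra h
      push_neg at h
      have h2 := D.p_mem i β hβ hβnp (D.p i α + m + 1) (by omega)
      apply D.p_max i α hα hnp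
      have e : α + ((D.p i α : ℝ) + 1) • s = β + ((D.p i α + m + 1 : ℕ) : ℝ) • s := by
        push_cast; module
      rw [e]; exact h2
    have le2 : D.p i α + m ≤ D.p i β := by
      by_contra h
      push_neg at h
      have h2 := mem_add (D.p i β + 1) (by omega)
      apply D.p_max i β hβ hβnp
      have e : β + ((D.p i β : ℝ) + 1) • s = β + ((D.p i β + 1 : ℕ) : ℝ) • s := by
        push_cast; ring_nf
      rw [e]; exact h2
    omega
  · have le1 : D.q i β ≤ D.q i α - m := by
      by_contra h
      push_neg at h
      have h2 := D.q_mem i β hβ hβnp (D.q i α - m + 1) (by omega)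
      apply D.q_max i α hα hnp
      have e : α - ((D.q i α : ℝ) + 1) • s = β - ((D.q i α - m + 1 : ℕ) : ℝ) • s := by
        push_cast [Nat.cast_sub hm]; module
      rw [e]; exact h2
    have le2 : D.q i α - m ≤ D.q i β := by
      by_contra h
      push_neg at h
      have h2 := mem_sub (D.q i β + 1) (by omega)
      apply D.q_max i β hβ hβnp
      have e : β - ((D.q i β : ℝ) + 1) • s = β - ((D.q i β + 1 : ℕ) : ℝ) • s := by
        push_cast; ring_nf
      rw [e]; exact h2
    omega

end YAux

open Classical Finset in
lemma yop_comp (D : RootSystemData E I) (i : I) (z : k) :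
    yop D k i z ∘ₗ yop D k i (-z) = LinearMap.id := by
  have hss : D.simple i ≠ -(D.simple i) := by
    intro h
    apply s_ne D i
    have h2 : (2:ℝ) • D.simple i = 0 := by
      rw [two_smul]; nth_rewrite 2 [h]; simp
    simpa using (smul_eq_zero.mp h2).resolve_left (by norm_num)
  have hss' : -(D.simple i) ≠ D.simple i := Ne.symm hss
  apply Finsupp.lhom_ext
  intro b c
  have hsingle : Finsupp.single b c = c • Finsupp.single b (1:k) := by
    rw [Finsupp.smul_single, smul_eq_mul, mul_one]
  rw [hsingle, map_smul, map_smul]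
  congr 1
  rw [LinearMap.comp_apply, LinearMap.id_apply]
  match b with
  | Sum.inr j =>
    rw [show (Finsupp.single (Sum.inr j) (1:k) : Vk D k) = tk D k j from rfl]
    rw [yop_t, map_add, map_smul, yop_t, yop_X, if_neg hss', if_pos rfl]
    module
  | Sum.inl a =>
    rw [show (Finsupp.single (Sum.inl a) (1:k) : Vk D k) = Xk D k a from rfl]
    by_cases ha1 : (a : E) = D.simple i
    · have hpair : ((|D.pair (D.simple i) (D.simple i)| : ℤ) : k) = 2 := by
        have h0 : ⟪D.simple i, D.simple i⟫ ≠ 0 := by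
          intro h; exact s_ne D i (inner_self_eq_zero.mp h)
        have := D.pair_def (D.simple i) (D.simple_mem i) (D.simple i) (D.simple_mem i)
        have h2 : (D.pair (D.simple i) (D.simple i) : ℝ) = 2 :=
          mul_right_cancel₀ h0 this
        have h3 : D.pair (D.simple i) (D.simple i) = 2 := by exact_mod_cast h2
        rw [h3]; norm_num
      rw [yop_X, if_pos ha1, map_add, map_add, map_smul, map_smul,
        yop_X, if_pos ha1, yop_t, hpair, yop_X, if_neg hss', if_pos rfl]
      module
    · by_cases ha2 : (a : E) = -(D.simple i)
      · rw [yop_X, if_neg ha1, if_pos ha2, yop_X, if_neg ha1, if_pos ha2]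
      · -- generic case
        have hα : (a : E) ∈ D.R := a.2
        have hnp : ∀ r : ℝ, (a : E) ≠ r • D.simple i := nonprop D hα ha1 ha2
        set p := D.p i (a : E) with hp
        set q := D.q i (a : E) with hq
        set Xn : ℕ → Vk D k := fun n =>
          if h : (a : E) - (n : ℝ) • D.simple i ∈ D.R then
            Xk D k ⟨(a : E) - (n : ℝ) • D.simple i, h⟩ else 0 with hXn
        have step1 : yop D k i (-z) (Xk D k a)
            = ∑ m ∈ range (q+1), (((p+m).choose m : k) * (-z)^m) • Xn m := by
          rw [yop_X, if_neg ha1, if_neg ha2]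
          simp only [factdiv, hXn]
          rfl
        have step2 : ∀ m ∈ range (q+1), yop D k i z (Xn m)
            = ∑ m' ∈ range (q - m + 1), (((p+(m+m')).choose m' : k) * z^m') • Xn (m+m') := by
          intro m hm
          rw [mem_range] at hm
          have hm' : m ≤ q := by omega
          have hmem : (a : E) - (m : ℝ) • D.simple i ∈ D.R := D.q_mem i _ hα hnp m hm'
          have hvals := string_vals' D hα hnp hm'
          have hsnp := nonprop_shift' D hnp (m : ℝ)
          have hne1 : (a : E) - (m : ℝ) • D.simple i ≠ D.simple i := by
            intro h; exact hsnp 1 (by rw [h, one_smul])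
          have hne2 : (a : E) - (m : ℝ) • D.simple i ≠ -(D.simple i) := by
            intro h; exact hsnp (-1) (by rw [h, neg_one_smul])
          rw [show Xn m = Xk D k ⟨(a : E) - (m : ℝ) • D.simple i, hmem⟩ from dif_pos hmem]
          rw [yop_X, if_neg hne1, if_neg hne2]
          rw [hvals.1, hvals.2]
          simp only [factdiv]
          refine Finset.sum_congr rfl fun m' _ => ?_
          have e : ((a : E) - (m : ℝ) • D.simple i) - (m' : ℝ) • D.simple i
              = (a : E) - ((m + m' : ℕ) : ℝ) • D.simple i := by push_cast; module
          congr 1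
          · congr 3
            omega
          · simp only [e, hXn]
        rw [step1, map_sum]
        simp only [map_smul]
        rw [Finset.sum_congr rfl fun m hm => by rw [step2 m hm]]
        rw [key_sum q p z Xn]
        have e0 : (a : E) - ((0 : ℕ) : ℝ) • D.simple i = (a : E) := by push_cast; module
        show (if h : (a : E) - ((0:ℕ) : ℝ) • D.simple i ∈ D.R then
            Xk D k ⟨(a : E) - ((0:ℕ) : ℝ) • D.simple i, h⟩ else 0) = Xk D k a
        simp only [e0]
        rw [dif_pos hα]

theorem stmt19' (D : RootSystemData E I) (k : Type) [Field k] (i : I) (z : k) :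
    xop D k i z ∘ₗ xop D k i (-z) = LinearMap.id ∧
    yop D k i z ∘ₗ yop D k i (-z) = LinearMap.id ∧
    Function.Bijective (xop D k i z) ∧
    Function.Bijective (yop D k i z) := by
  refine ⟨xop_comp D i z, yop_comp D i z, ?_, ?_⟩
  · have h1 := xop_comp D i z
    have h2 := xop_comp D i (-z)
    rw [neg_neg] at h2
    constructor
    · intro u v huv
      have := congrArg (fun f => f u) h2
      have := congrArg (fun f => f v) h2
      calc u = xop D k i (-z) (xop D k i z u) := by
              rw [← LinearMap.comp_apply, h2, LinearMap.id_apply]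
        _ = xop D k i (-z) (xop D k i z v) := by rw [huv]
        _ = v := by rw [← LinearMap.comp_apply, h2, LinearMap.id_apply]
    · intro u
      exact ⟨xop D k i (-z) u, by rw [← LinearMap.comp_apply, h1, LinearMap.id_apply]⟩
  · have h1 := yop_comp D i z
    have h2 := yop_comp D i (-z)
    rw [neg_neg] at h2
    constructor
    · intro u v huv
      calc u = yop D k i (-z) (yop D k i z u) := by
              rw [← LinearMap.comp_apply, h2, LinearMap.id_apply]
        _ = yop D k i (-z) (yop D k i z v) := by rw [huv]
        _ = v := by rw [← LinearMap.comp_apply, h2, LinearMap.id_apply]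
    · intro u
      exact ⟨yop D k i (-z) u, by rw [← LinearMap.comp_apply, h1, LinearMap.id_apply]⟩

/-- Over any field `k`, the Chevalley generators are invertible:
`x_i(z) ∘ x_i(-z) = id` and `y_i(z) ∘ y_i(-z) = id`; in particular
`x_i(z)` and `y_i(z)` are linear automorphisms of `V_k`. -/
theorem stmt19 {E : Type} [NormedAddCommGroup E] [InnerProductSpace ℝ E]
    [FiniteDimensional ℝ E] {I : Type} [Fintype I]
    (D : RootSystemData E I) (k : Type) [Field k] (i : I) (z : k) :
    xop D k i z ∘ₗ xop D k i (-z) = LinearMap.id ∧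
    yop D k i z ∘ₗ yop D k i (-z) = LinearMap.id ∧
    Function.Bijective (xop D k i z) ∧
    Function.Bijective (yop D k i z) := by
  exact stmt19' D k i z
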